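/- Let G be a graph on vertices {1,…,2k+1} arranged as an odd cycle (vertex v adjacent to v+1 mod 2k+1). Suppose Y is a real symmetric (2k+2)×(2k+2) positive semidefinite matrix, indexed by {0,1,…,2k+1}, with Y_{vw} ≥ 0 for all v,w, Y_{0v} = Y_{vv} = 1 for all cycle vertices v, Y_{vw} = 0 when v ∼ w, ∑_{v∈S} Y_{vw} ≤ 1 for every clique S and vertex w, and Y_{00} + ∑_{v∈S}∑_{w∈T} Y_{vw} ≥ |S| + |T| for all cliques S, T. Then Y_{00} ≥ (2k+1)/k. -/

import Mathlib

noncomputable section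

open Fin.NatCast Fin.CommRing

lemma pairsum (h : ℕ → ℝ) (M : ℕ) : ∑ i ∈ Finset.range (2*M), h i
    = ∑ i ∈ Finset.range M, (h (2*i) + h (2*i+1)) := by
  induction M with
  | zero => simp
  | succ m ih =>
    rw [Finset.sum_range_succ, ← ih, show 2*(m+1) = (2*m+1)+1 by ring,
      Finset.sum_range_succ, Finset.sum_range_succ]
    ring


/-- For the odd cycle `C_{2k+1}` (`k ≥ 2`), any real symmetric positive semidefinite matrix
`Y` indexed by `{0} ∪ V(C_{2k+1})` satisfying the listed linear constraints (entries
nonnegative, `Y_{0v} = Y_{vv} = 1`, `Y_{vw} = 0` on edges, row sums over cliques at most `1`,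
and the clique inequality `Y₀₀ + ∑_{v∈S}∑_{w∈T} Y_{vw} ≥ |S| + |T|`) has `Y₀₀ ≥ (2k+1)/k`. -/
theorem stmt9 (k : ℕ) (hk : 2 ≤ k)
    (G : SimpleGraph (Fin (2 * k + 1))) (hG : G = SimpleGraph.cycleGraph (2 * k + 1))
    (Y : Matrix (Option (Fin (2 * k + 1))) (Option (Fin (2 * k + 1))) ℝ)
    (hsymm : Y.IsSymm) (hpsd : Y.PosSemidef)
    (hnonneg : ∀ v w, 0 ≤ Y v w)
    (h0v : ∀ v : Fin (2 * k + 1), Y none (some v) = 1)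
    (hvv : ∀ v : Fin (2 * k + 1), Y (some v) (some v) = 1)
    (hadj : ∀ v w : Fin (2 * k + 1), G.Adj v w → Y (some v) (some w) = 0)
    (hclique1 : ∀ (S : Finset (Fin (2 * k + 1))), G.IsClique (S : Set (Fin (2 * k + 1))) →
      ∀ w : Fin (2 * k + 1), ∑ v ∈ S, Y (some v) (some w) ≤ 1)
    (hclique2 : ∀ (S T : Finset (Fin (2 * k + 1))),
      G.IsClique (S : Set (Fin (2 * k + 1))) → G.IsClique (T : Set (Fin (2 * k + 1))) →
      (S.card : ℝ) + T.card ≤ Y none none + ∑ v ∈ S, ∑ w ∈ T, Y (some v) (some w)) :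
    (2 * k + 1 : ℝ) / k ≤ Y none none := by
  subst hG
  have hk0 : (0:ℝ) < k := by positivity
  have h1lt : 1 < 2*k+1 := by omega
  -- basic Fin / adjacency facts
  have hAdj : ∀ a : Fin (2*k+1), (SimpleGraph.cycleGraph (2*k+1)).Adj a (a+1) := by
    intro a
    rw [SimpleGraph.cycleGraph_adj']
    right
    simp [Fin.val_one', Nat.mod_eq_of_lt h1lt]
  have hne : ∀ a : Fin (2*k+1), a ≠ a + 1 := by
    intro a h
    have := congrArg (· - a) h
    simp at this
    omega
  have hpairclique : ∀ a : Fin (2*k+1),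
      (SimpleGraph.cycleGraph (2*k+1)).IsClique (({a, a+1} : Finset (Fin (2*k+1))) :
        Set (Fin (2*k+1))) := by
    intro a
    rw [Finset.coe_insert, Finset.coe_singleton, SimpleGraph.isClique_pair]
    exact fun _ => hAdj a
  have hpair : ∀ a w : Fin (2*k+1),
      Y (some a) (some w) + Y (some (a+1)) (some w) ≤ 1 := by
    intro a w
    have := hclique1 {a, a+1} (hpairclique a) w
    rwa [Finset.sum_pair (hne a)] at this
  have hedge : ∀ a : Fin (2*k+1), Y (some a) (some (a+1)) = 0 :=
    fun a => hadj _ _ (hAdj a)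
  have hedge' : ∀ a : Fin (2*k+1), Y (some (a+1)) (some a) = 0 :=
    fun a => hadj _ _ (hAdj a).symm
  -- row sum bound
  have hrow : ∀ u : Fin (2*k+1), ∑ w, Y (some u) (some w) ≤ (k : ℝ) := by
    intro u
    have hre : ∑ w, Y (some u) (some w)
        = ∑ j ∈ Finset.range (2*k+1), Y (some u) (some (u + (j : Fin (2*k+1)))) := by
      rw [← Fin.sum_univ_eq_sum_range
        (fun j => Y (some u) (some (u + (j : Fin (2*k+1))))) (2*k+1)]
      rw [← Equiv.sum_comp (Equiv.addLeft u) (fun w => Y (some u) (some w))]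
      simp [Fin.cast_val_eq_self]
    rw [hre]
    set g : ℕ → ℝ := fun j => Y (some u) (some (u + (j : Fin (2*k+1)))) with hg
    obtain ⟨m, rfl⟩ : ∃ m, k = m + 2 := ⟨k - 2, by omega⟩
    have key : ∑ j ∈ Finset.range (2*(m+2)+1), g j
        = g 0 + g 1 + (∑ i ∈ Finset.range (2*(m+1)), g (2+i)) + g (2+2*(m+1)) := by
      rw [show 2*(m+2)+1 = 2 + 2*(m+1) + 1 by ring, Finset.sum_range_succ,
        Finset.sum_range_add, Finset.sum_range_succ, Finset.sum_range_succ,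
        Finset.sum_range_zero]
      ring
    rw [key]
    have hg0 : g 0 = 1 := by simp [hg, hvv]
    have hg1 : g 1 = 0 := by simpa [hg] using hedge u
    have hglast : g (2+2*(m+1)) = 0 := by
      have hc : u + (((2+2*(m+1) : ℕ)) : Fin (2*(m+2)+1)) + 1 = u := by
        have h1 : (((2+2*(m+1) : ℕ)) : Fin (2*(m+2)+1)) + 1
            = (((2*(m+2)+1 : ℕ)) : Fin (2*(m+2)+1)) := by push_cast; ring
        rw [add_assoc, h1, Fin.natCast_self, add_zero]
      have := hedge' (u + (((2+2*(m+1) : ℕ)) : Fin (2*(m+2)+1)))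
      rw [hc] at this
      simpa [hg] using this
    have hmid : ∑ i ∈ Finset.range (2*(m+1)), g (2+i) ≤ (m+1 : ℝ) := by
      rw [pairsum (fun i => g (2+i)) (m+1)]
      calc ∑ i ∈ Finset.range (m+1), (g (2+2*i) + g (2+(2*i+1)))
          ≤ ∑ _i ∈ Finset.range (m+1), (1:ℝ) := by
            apply Finset.sum_le_sum
            intro i _
            have harg : u + (((2+(2*i+1) : ℕ)) : Fin (2*(m+2)+1))
                = u + (((2+2*i : ℕ)) : Fin (2*(m+2)+1)) + 1 := by push_cast; ring
            have h2 := hpair (u + (((2+2*i : ℕ)) : Fin (2*(m+2)+1))) u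
            have hs1 := hsymm.apply (some u)
              (some (u + (((2+2*i : ℕ)) : Fin (2*(m+2)+1))))
            have hs2 := hsymm.apply (some u)
              (some (u + (((2+2*i : ℕ)) : Fin (2*(m+2)+1)) + 1))
            simp only [hg, harg]
            rw [hs1, hs2] at h2
            exact h2
        _ = (m+1 : ℝ) := by simp
    rw [hg0, hg1, hglast]
    push_cast
    linarith
  -- block function
  set B : Fin (2*k+1) → ℝ := fun w =>
    Y (some 0) (some w) + Y (some 0) (some (w+1))
      + Y (some 1) (some w) + Y (some 1) (some (w+1)) with hB
  have hshift : ∀ v : Fin (2*k+1),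
      ∑ w, Y (some v) (some (w+1)) = ∑ w, Y (some v) (some w) := by
    intro v
    exact Equiv.sum_comp (Equiv.addRight (1 : Fin (2*k+1))) (fun w => Y (some v) (some w))
  have hBsum : ∑ w, B w ≤ 4*(k:ℝ) := by
    simp only [hB]
    rw [Finset.sum_add_distrib, Finset.sum_add_distrib, Finset.sum_add_distrib,
      hshift 0, hshift 1]
    have h0 := hrow 0
    have h1 := hrow 1
    linarith
  have h01 : (0 : Fin (2*k+1)) + 1 = 1 := zero_add 1
  have hB0 : B 0 = 2 := by
    simp only [hB, h01]
    have e1 : Y (some 0) (some 1) = 0 := by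
      have := hedge 0; rwa [h01] at this
    have e2 : Y (some 1) (some 0) = 0 := by
      have := hedge' 0; rwa [h01] at this
    rw [hvv, hvv, e1, e2]; ring
  have hmem0 : (0 : Fin (2*k+1)) ∈ (Finset.univ : Finset (Fin (2*k+1))) := Finset.mem_univ _
  have herase_sum : ∑ w ∈ Finset.univ.erase 0, B w ≤ 4*(k:ℝ) - 2 := by
    have := Finset.add_sum_erase Finset.univ B hmem0
    rw [hB0] at this
    linarith [hBsum, this.symm.le, this.le]
  have hcard : (Finset.univ.erase (0 : Fin (2*k+1))).card = 2*k := by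
    rw [Finset.card_erase_of_mem hmem0, Finset.card_univ, Fintype.card_fin]
    omega
  obtain ⟨w, hwmem, hBw⟩ : ∃ w ∈ Finset.univ.erase (0 : Fin (2*k+1)), B w ≤ 2 - 1/(k:ℝ) := by
    apply Finset.exists_le_of_sum_le
    · refine ⟨1, Finset.mem_erase.mpr ⟨?_, Finset.mem_univ _⟩⟩
      simp [Fin.ext_iff, Fin.val_one', Nat.mod_eq_of_lt h1lt]
    · rw [Finset.sum_const, hcard, nsmul_eq_mul]
      have : (2*k : ℝ) * (2 - 1/(k:ℝ)) = 4*(k:ℝ) - 2 := by field_simp; ring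
      push_cast
      push_cast at this
      rw [this]
      exact herase_sum
  -- apply hclique2
  have hc2 := hclique2 {0, (0:Fin (2*k+1))+1} {w, w+1} (hpairclique 0) (hpairclique w)
  rw [Finset.card_pair (hne 0), Finset.card_pair (hne w)] at hc2
  rw [Finset.sum_pair (hne 0)] at hc2
  rw [Finset.sum_pair (hne w), Finset.sum_pair (hne w)] at hc2
  rw [h01] at hc2
  have hBeq : Y (some 0) (some w) + Y (some 0) (some (w+1))
      + (Y (some 1) (some w) + Y (some 1) (some (w+1))) = B w := by
    simp only [hB]; ring
  rw [hBeq] at hc2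
  have hfin : (2*(k:ℝ)+1)/k = 2 + 1/(k:ℝ) := by field_simp
  rw [hfin]
  push_cast at hc2
  linarith
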